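/- For every zone Z and bound functions L, U : X → ℕ∪{−∞}: Extra⁺_{LU}(Z) ⊆ a_{≼LU}(Z). -/

import Mathlib

attribute [local instance] Classical.propDecidable

noncomputable section

namespace TAform

/-! ### Weights `(≼, c)` with `c ∈ ℤ ∪ {∞}` -/

/-- Values in `ℤ ∪ {∞}`: `none` represents `∞`. -/
abbrev OVal := Option ℤ

/-- Addition on `ℤ ∪ {∞}`. -/
def ovAdd : OVal → OVal → OVal
  | some a, some b => some (a + b)
  | _, _ => none

/-- Strict order on `ℤ ∪ {∞}`. -/
def ovLt : OVal → OVal → Prop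
  | some a, some b => a < b
  | some _, none => True
  | none, _ => False

/-- A weight `(≼, c)`: `strict = true` means `≼` is `<`, `strict = false` means `≤`;
`val ∈ ℤ ∪ {∞}`. -/
structure Weight where
  strict : Bool
  val : OVal

/-- The weight `(<, ∞)`. -/
def winf : Weight := ⟨true, none⟩

/-- The weight `(≤, c)`. -/
def wle (c : ℤ) : Weight := ⟨false, some c⟩

/-- The weight `(<, c)`. -/
def wlt (c : ℤ) : Weight := ⟨true, some c⟩

/-- Addition: `(≼₁,c₁)+(≼₂,c₂) = (≼,c₁+c₂)` where `≼` is `<` iff `≼₁` or `≼₂` is `<`. -/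
def Weight.add (a b : Weight) : Weight := ⟨a.strict || b.strict, ovAdd a.val b.val⟩

/-- Order: `(≼₁,c₁) < (≼₂,c₂)` iff `c₁ < c₂`, or `c₁ = c₂`, `≼₁` is `<` and `≼₂` is `≤`. -/
def Weight.lt (a b : Weight) : Prop :=
  ovLt a.val b.val ∨ (a.val = b.val ∧ a.strict = true ∧ b.strict = false)

def Weight.le (a b : Weight) : Prop := Weight.lt a b ∨ a = b

/-- Minus: `−(≼,c) = (≼,−c)`. -/
def Weight.neg (w : Weight) : Weight := ⟨w.strict, Option.map (fun c => -c) w.val⟩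

/-- Floor: `⌊(<,c)⌋ = (≤,c−1)` and `⌊(≤,c)⌋ = (≤,c)`. -/
def Weight.floor (w : Weight) : Weight :=
  ⟨false, if w.strict then Option.map (fun c => c - 1) w.val else w.val⟩

/-- Ceiling (on integer-valued weights): `⌈(≤,c)⌉ = (≤,c)` and `⌈(<,c)⌉ = (<,c+1)`. -/
def Weight.ceil (w : Weight) : Weight :=
  if w.strict then ⟨true, Option.map (fun c => c + 1) w.val⟩ else w

/-- Maximum of two weights. -/
def Weight.max (a b : Weight) : Weight := if Weight.lt a b then b else a

/-- Satisfaction: `d ≼ c` for a real number `d` and a weight `(≼,c)`. -/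
def Weight.sat (w : Weight) (d : ℝ) : Prop :=
  match w.val with
  | none => True
  | some c => if w.strict then d < (c : ℝ) else d ≤ (c : ℝ)

/-! ### Distance graphs and their semantics -/

/-- Vertices: clocks of `X` together with the special vertex `x₀` (represented by `none`). -/
abbrev Vtx (X : Type*) := Option X

/-- A distance graph: a weight for every ordered pair of vertices.  The edge
`a →^{≼ c} b` represents the constraint `v b − v a ≼ c`. -/
abbrev DGraph (X : Type*) := Vtx X → Vtx X → Weight

/-- A clock valuation. -/
abbrev Val (X : Type*) := X → ℝ

/-- The valuation is nonnegative (clock valuations map into `ℝ≥0`). -/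
def Nonneg {X : Type*} (v : Val X) : Prop := ∀ x, 0 ≤ v x

/-- Extension of a valuation to all vertices, sending `x₀` to `0`. -/
def extV {X : Type*} (v : Val X) : Vtx X → ℝ
  | none => 0
  | some x => v x

/-- Semantics of a distance graph: the set of nonnegative clock valuations
(with `x₀ = 0`) satisfying all edge constraints. -/
def sem {X : Type*} (G : DGraph X) : Set (Val X) :=
  { v | Nonneg v ∧ ∀ a b, (G a b).sat (extV v b - extV v a) }

/-- Weight of the path `a :: l ++ [b]` in `G` (sum of the weights of its edges). -/
def pathWeight {X : Type*} (G : DGraph X) : Vtx X → List (Vtx X) → Vtx X → Weight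
  | a, [], b => G a b
  | a, c :: l, b => (G a c).add (pathWeight G c l b)

/-- `G` has only positive cycles: no cycle has weight at most `(<,0)`. -/
def OnlyPositiveCycles {X : Type*} (G : DGraph X) : Prop :=
  ∀ (a : Vtx X) (l : List (Vtx X)), ¬ (pathWeight G a l a).le (wlt 0)

/-- Canonical form: the weight of the edge from `a` to `b` is a lower bound of the
weights of all paths from `a` to `b`. -/
def PathCanonical {X : Type*} (G : DGraph X) : Prop :=
  ∀ (a b : Vtx X) (l : List (Vtx X)), (G a b).le (pathWeight G a l b)

/-- The weight `w` bounds the difference `v b − v a` over all `v ∈ S`. -/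
def Bounds {X : Type*} (S : Set (Val X)) (a b : Vtx X) (w : Weight) : Prop :=
  ∀ v ∈ S, w.sat (extV v b - extV v a)

/-- `G` is the canonical distance graph of the set `S`: it represents `S` and each of
its edge weights is the least weight bounding the corresponding difference over `S`
(equivalently, for sets defined by clock constraints, the lower bound of the weights
of paths between its endpoints). -/
def IsCanonGraph {X : Type*} (G : DGraph X) (S : Set (Val X)) : Prop :=
  sem G = S ∧ ∀ a b w, Bounds S a b w → (G a b).le w

/-- A zone: a set of valuations defined by a conjunction of constraints of the form
`x − y # c` or `x # c`, i.e. the set represented by some distance graph. -/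
def IsZone {X : Type*} (Z : Set (Val X)) : Prop := ∃ G : DGraph X, sem G = Z

/-! ### Regions and closure -/

/-- Region equivalence with respect to the bound function `α`: same integer parts
(or both above the bound), same set of clocks with zero fractional part, and the
same ordering of fractional parts of bounded clocks. -/
def regEq {X : Type*} (α : X → ℕ) (v w : Val X) : Prop :=
  (∀ x, ((α x : ℝ) < v x ∧ (α x : ℝ) < w x) ∨
    (⌊v x⌋ = ⌊w x⌋ ∧ (Int.fract (v x) = 0 ↔ Int.fract (w x) = 0))) ∧
  (∀ x y, v x ≤ (α x : ℝ) → v y ≤ (α y : ℝ) →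
    (Int.fract (v x) ≤ Int.fract (v y) ↔ Int.fract (w x) ≤ Int.fract (w y)))

/-- A region with respect to `α`: an equivalence class of region equivalence
(inside the nonnegative valuations). -/
def IsRegion {X : Type*} (α : X → ℕ) (R : Set (Val X)) : Prop :=
  ∃ v : Val X, Nonneg v ∧ R = { w | Nonneg w ∧ regEq α v w }

/-- Closure abstraction: the union of the regions (w.r.t. `α`) intersecting `S`. -/
def Closure {X : Type*} (α : X → ℕ) (S : Set (Val X)) : Set (Val X) :=
  ⋃₀ { R | IsRegion α R ∧ (R ∩ S).Nonempty }

/-! ### LU-bounds and the `Extra⁺_LU` extrapolation -/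

/-- `w > (≤, l)` where `l ∈ ℕ ∪ {−∞}` (`⊥` is `−∞`). -/
def gtLB (w : Weight) (l : WithBot ℕ) : Prop :=
  ∀ n : ℕ, l = (n : WithBot ℕ) → ovLt (some (n : ℤ)) w.val

/-- `−w > (≤, l)` where `l ∈ ℕ ∪ {−∞}`. -/
def negGtLB (w : Weight) (l : WithBot ℕ) : Prop :=
  ∃ c : ℤ, w.val = some c ∧ ∀ n : ℕ, l = (n : WithBot ℕ) → c < -(n : ℤ)

/-- The weight `(<, −u)` for `u ∈ ℕ ∪ {−∞}` (with `(<,∞)` when `u = −∞`). -/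
def wltNeg (u : WithBot ℕ) : Weight :=
  ⟨true, WithBot.recBotCoe none (fun n => some (-(n : ℤ))) u⟩

/-- The `Extra⁺_{LU}` extrapolation, applied edgewise to a distance graph `G`
(the canonical graph of a zone): `Z⁺_{xy} = (<,∞)` if `Z_{xy} > (≤,L_y)`, or
`−Z_{y0} > (≤,L_y)`, or `−Z_{x0} > (≤,U_x)` and `y ≠ x₀`;
`Z⁺_{x0} = (<,−U_x)` if `−Z_{x0} > (≤,U_x)`; and `Z⁺_{xy} = Z_{xy}` otherwise. -/
def extraLU {X : Type*} (L U : X → WithBot ℕ) (G : DGraph X) : DGraph X := fun a b =>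
  match a, b with
  | some x, some y =>
      if gtLB (G (some x) (some y)) (L y) ∨ negGtLB (G (some y) none) (L y) ∨
          negGtLB (G (some x) none) (U x)
      then winf else G (some x) (some y)
  | none, some y =>
      if gtLB (G none (some y)) (L y) ∨ negGtLB (G (some y) none) (L y)
      then winf else G none (some y)
  | some x, none =>
      if negGtLB (G (some x) none) (U x) then wltNeg (U x) else G (some x) none
  | none, none => G none none

/-! ### LU-preorder and its abstraction -/

/-- `l < r` where `l ∈ ℕ ∪ {−∞}` and `r : ℝ`. -/
def lbLtR (l : WithBot ℕ) (r : ℝ) : Prop := ∀ n : ℕ, l = (n : WithBot ℕ) → (n : ℝ) < r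

/-- The LU-preorder `ν' ≼_{LU} ν`: for each clock `x`, either `ν' x = ν x`,
or `L x < ν' x < ν x`, or `U x < ν x < ν' x`. -/
def LUpre {X : Type*} (L U : X → WithBot ℕ) (ν' ν : Val X) : Prop :=
  ∀ x, ν' x = ν x ∨ (lbLtR (L x) (ν' x) ∧ ν' x < ν x) ∨ (lbLtR (U x) (ν x) ∧ ν x < ν' x)

/-- The abstraction `a_{≼LU}(W) = { ν | ∃ ν' ∈ W, ν' ≼_{LU} ν }` (inside the
nonnegative valuations). -/
def aLU {X : Type*} (L U : X → WithBot ℕ) (W : Set (Val X)) : Set (Val X) :=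
  { ν | Nonneg ν ∧ ∃ ν' ∈ W, LUpre L U ν' ν }

/-! ### Guards, transitions, timed automata -/

/-- Comparison operators `# ∈ {<, ≤, =, ≥, >}`. -/
inductive Cmp | lt | le | eq | ge | gt
deriving DecidableEq

/-- Satisfaction of a comparison by real numbers. -/
def Cmp.sat : Cmp → ℝ → ℝ → Prop
  | .lt, a, b => a < b
  | .le, a, b => a ≤ b
  | .eq, a, b => a = b
  | .ge, a, b => a ≥ b
  | .gt, a, b => a > b

/-- A clock constraint (guard): a conjunction (list) of constraints `x # c`, `c ∈ ℕ`. -/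
abbrev Guard (X : Type*) := List (X × Cmp × ℕ)

/-- `v ⊨ g`: every conjunct of the guard holds. -/
def gsat {X : Type*} (v : Val X) (g : Guard X) : Prop :=
  ∀ p ∈ g, Cmp.sat p.2.1 (v p.1) (p.2.2 : ℝ)

/-- `[R]v`: reset the clocks in `R` to `0`, leaving the others unchanged. -/
def resetVal {X : Type*} (R : Set X) (v : Val X) : Val X := Set.indicator Rᶜ v

/-- One step `ν →^{δ,t} ν'` for a transition with guard `g` and reset set `R`:
`ν + δ ⊨ g` and `ν' = [R](ν + δ)`. -/
def step {X : Type*} (g : Guard X) (R : Set X) (δ : ℝ) (ν ν' : Val X) : Prop :=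
  0 ≤ δ ∧ gsat (fun x => ν x + δ) g ∧ ν' = resetVal R (fun x => ν x + δ)

/-- `Post(S,t)`: all valuations reachable by the transition from valuations in `S`. -/
def Post {X : Type*} (g : Guard X) (R : Set X) (S : Set (Val X)) : Set (Val X) :=
  { ν' | ∃ ν ∈ S, ∃ δ : ℝ, step g R δ ν ν' }

/-- A timed automaton `(Q, q₀, X, T, Acc)`. -/
structure TimedAuto (Q X : Type*) where
  init : Q
  trans : Set (Q × Guard X × Set X × Q)
  acc : Set Q

/-- `(q,ν) →^{δ,t} (q',ν')` for a transition `t = (q,g,R,q')` of the automaton. -/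
def TimedAuto.cstep {Q X : Type*} (A : TimedAuto Q X) (t : Q × Guard X × Set X × Q)
    (δ : ℝ) (c c' : Q × Val X) : Prop :=
  t ∈ A.trans ∧ c.1 = t.1 ∧ c'.1 = t.2.2.2 ∧ step t.2.1 t.2.2.1 δ c.2 c'.2
/-! ### Real-valued weights -/

structure RW where
  strict : Bool
  val : Option ℝ

namespace RW

def sat (w : RW) (d : ℝ) : Prop :=
  match w.val with
  | none => True
  | some c => if w.strict then d < c else d ≤ c

def add (a b : RW) : RW :=
  ⟨a.strict || b.strict, match a.val, b.val with
    | some x, some y => some (x + y)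
    | _, _ => none⟩

def le (a b : RW) : Prop := ∀ d, a.sat d → b.sat d

lemma sat_none {s : Bool} (d : ℝ) : sat ⟨s, none⟩ d := by simp [sat]

lemma sat_of_val_none {w : RW} (h : w.val = none) (d : ℝ) : w.sat d := by
  obtain ⟨s, v⟩ := w; cases h; exact sat_none d

lemma le_refl (a : RW) : le a a := fun _ h => h

lemma le_trans {a b c : RW} (h1 : le a b) (h2 : le b c) : le a c :=
  fun d h => h2 d (h1 d h)

lemma le_of_val_none {a b : RW} (h : b.val = none) : le a b :=
  fun d _ => sat_of_val_none h d

lemma add_val_none_left {a b : RW} (h : a.val = none) : (add a b).val = none := by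
  obtain ⟨s, v⟩ := a; cases h; cases b.val <;> simp [add]

lemma add_val_none_right {a b : RW} (h : b.val = none) : (add a b).val = none := by
  obtain ⟨s, v⟩ := b; cases h; obtain ⟨s', v'⟩ := a; cases v' <;> simp [add]

lemma add_comm (a b : RW) : add a b = add b a := by
  obtain ⟨sa, va⟩ := a; obtain ⟨sb, vb⟩ := b
  cases va <;> cases vb <;> simp [add, Bool.or_comm] <;> ring

lemma add_assoc (a b c : RW) : add (add a b) c = add a (add b c) := by
  obtain ⟨sa, va⟩ := a; obtain ⟨sb, vb⟩ := b; obtain ⟨sc, vc⟩ := c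
  cases va <;> cases vb <;> cases vc <;> simp [add, Bool.or_assoc] <;> ring

def rw0 : RW := ⟨false, some 0⟩

lemma add_rw0 (a : RW) : add a rw0 = a := by
  obtain ⟨s, v⟩ := a; cases v <;> simp [add, rw0]

lemma rw0_add (a : RW) : add rw0 a = a := by rw [add_comm, add_rw0]

lemma sat_add {a b : RW} {d e : ℝ} (ha : a.sat d) (hb : b.sat e) :
    (add a b).sat (d + e) := by
  obtain ⟨sa, va⟩ := a; obtain ⟨sb, vb⟩ := b
  cases va with
  | none => exact sat_none _
  | some ca =>
    cases vb with
    | none => exact sat_none _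
    | some cb =>
      simp only [sat, add] at *
      cases sa <;> cases sb <;> simp_all <;> linarith

/-- Numeric characterisation of `le`. -/
lemma le_iff {a b : RW} : le a b ↔
    b.val = none ∨ (∃ ca cb, a.val = some ca ∧ b.val = some cb ∧
      (ca < cb ∨ (ca = cb ∧ (b.strict = true → a.strict = true)))) := by
  obtain ⟨sa, va⟩ := a; obtain ⟨sb, vb⟩ := b
  constructor
  · intro h
    cases vb with
    | none => exact Or.inl rfl
    | some cb =>
      right
      cases va with
      | none =>
        exfalso
        have := h (cb + 1) (sat_none _)
        simp only [sat] at this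
        cases sb <;> simp_all <;> linarith
      | some ca =>
        refine ⟨ca, cb, rfl, rfl, ?_⟩
        by_cases hlt : ca < cb
        · exact Or.inl hlt
        · right
          by_cases heq : ca = cb
          · subst heq
            refine ⟨rfl, ?_⟩
            intro hsb
            by_contra hsa
            have hsa' : sa = false := by simpa using hsa
            have hsb' : sb = true := hsb
            have := h ca (by simp [sat, hsa'])
            simp [sat, hsb'] at this
          · exfalso
            have hgt : cb < ca := lt_of_le_of_ne (not_lt.mp hlt) (Ne.symm heq)
            have := h ((ca + cb) / 2) (by simp only [sat]; cases sa <;> simp <;> linarith)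
            simp only [sat] at this
            cases sb <;> simp_all <;> linarith
  · rintro (h | ⟨ca, cb, hva, hvb, hc⟩)
    · exact le_of_val_none h
    · intro d hd
      simp only at hva hvb; subst hva; subst hvb
      simp only [sat] at *
      rcases hc with hlt | ⟨heq, himp⟩
      · cases sa <;> cases sb <;> simp_all <;> linarith
      · subst heq
        cases sb with
        | false => cases sa <;> simp_all <;> linarith
        | true => rw [himp rfl] at hd; simpa using hd

lemma le_total (a b : RW) : le a b ∨ le b a := by
  obtain ⟨sa, va⟩ := a; obtain ⟨sb, vb⟩ := b
  cases vb with
  | none => exact Or.inl (le_of_val_none rfl)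
  | some cb =>
    cases va with
    | none => exact Or.inr (le_of_val_none rfl)
    | some ca =>
      rcases lt_trichotomy ca cb with h | h | h
      · exact Or.inl (le_iff.mpr (Or.inr ⟨ca, cb, rfl, rfl, Or.inl h⟩))
      · subst h
        cases sa
        · exact Or.inr (le_iff.mpr (Or.inr ⟨ca, ca, rfl, rfl, Or.inr ⟨rfl, by simp⟩⟩))
        · exact Or.inl (le_iff.mpr (Or.inr ⟨ca, ca, rfl, rfl, Or.inr ⟨rfl, by simp⟩⟩))
      · exact Or.inr (le_iff.mpr (Or.inr ⟨cb, ca, rfl, rfl, Or.inl h⟩))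

lemma add_mono {a a' b b' : RW} (ha : le a a') (hb : le b b') :
    le (add a b) (add a' b') := by
  rw [le_iff] at ha hb ⊢
  rcases ha with ha | ⟨ca, ca', hva, hva', hca⟩
  · exact Or.inl (add_val_none_left ha)
  · rcases hb with hb | ⟨cb, cb', hvb, hvb', hcb⟩
    · exact Or.inl (add_val_none_right hb)
    · right
      refine ⟨ca + cb, ca' + cb', ?_, ?_, ?_⟩
      · simp [add, hva, hvb]
      · simp [add, hva', hvb']
      · rcases hca with h1 | ⟨h1, h1'⟩ <;> rcases hcb with h2 | ⟨h2, h2'⟩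
        · exact Or.inl (by linarith)
        · exact Or.inl (by linarith)
        · exact Or.inl (by linarith)
        · refine Or.inr ⟨by rw [h1, h2], ?_⟩
          intro hs
          simp only [add, Bool.or_eq_true] at hs ⊢
          rcases hs with hs | hs
          · exact Or.inl (h1' hs)
          · exact Or.inr (h2' hs)

lemma add_mono_left {a a' b : RW} (ha : le a a') : le (add a b) (add a' b) :=
  add_mono ha (le_refl b)

lemma add_mono_right {a b b' : RW} (hb : le b b') : le (add a b) (add a b') :=
  add_mono (le_refl a) hb

noncomputable def min (a b : RW) : RW := if le a b then a else b

lemma min_eq_or (a b : RW) : min a b = a ∨ min a b = b := by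
  unfold min; split <;> simp

lemma min_le_left (a b : RW) : le (min a b) a := by
  unfold min; split
  · exact le_refl a
  · rcases le_total a b with h | h
    · exact absurd h ‹_›
    · exact h

lemma min_le_right (a b : RW) : le (min a b) b := by
  unfold min; split
  · assumption
  · exact le_refl b

lemma le_min {a b c : RW} (h1 : le c a) (h2 : le c b) : le c (min a b) := by
  rcases min_eq_or a b with h | h <;> rw [h] <;> assumption

lemma min_sat_iff {a b : RW} {d : ℝ} : (min a b).sat d ↔ a.sat d ∧ b.sat d := by
  constructor
  · intro h
    exact ⟨min_le_left a b d h, min_le_right a b d h⟩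
  · intro ⟨ha, hb⟩
    rcases min_eq_or a b with h | h <;> rw [h] <;> assumption

lemma le_rw0_of_sat0 {w : RW} (h : w.sat 0) : le rw0 w := by
  obtain ⟨s, v⟩ := w
  cases v with
  | none => exact le_of_val_none rfl
  | some c =>
    intro d hd
    simp only [sat, rw0] at *
    cases s <;> simp_all <;> linarith

lemma sat0_add {a b : RW} (ha : a.sat 0) (hb : b.sat 0) : (add a b).sat 0 := by
  have := sat_add ha hb; simpa using this

end RW

namespace RW

lemma sat_of_some {w : RW} {c d : ℝ} (hc : w.val = some c)
    (h : d < c ∨ (d ≤ c ∧ w.strict = false)) : w.sat d := by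
  obtain ⟨s, v⟩ := w
  have hc' : v = some c := hc
  subst hc'
  simp only [sat]
  rcases h with h | ⟨h, hs⟩
  · cases s <;> simp <;> linarith
  · have : s = false := hs
    subst this; simpa using h

lemma sat_some_elim {w : RW} {c d : ℝ} (hc : w.val = some c) (h : w.sat d) :
    d < c ∨ (d ≤ c ∧ w.strict = false) := by
  obtain ⟨s, v⟩ := w
  have hc' : v = some c := hc
  subst hc'
  simp only [sat] at h
  cases s
  · simp at h; exact Or.inr ⟨h, rfl⟩
  · simp at h; exact Or.inl h

lemma add_val {a b : RW} {x y : ℝ} (ha : a.val = some x) (hb : b.val = some y) :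
    (add a b).val = some (x + y) := by
  obtain ⟨sa, va⟩ := a; obtain ⟨sb, vb⟩ := b
  have ha' : va = some x := ha
  have hb' : vb = some y := hb
  subst ha'; subst hb'; rfl

lemma add_strict (a b : RW) : (add a b).strict = (a.strict || b.strict) := rfl

end RW
/-! ### Weight lemmas -/

lemma Wsat_of_val_none {w : Weight} (h : w.val = none) (d : ℝ) : w.sat d := by
  obtain ⟨s, v⟩ := w; cases h; simp [Weight.sat]

lemma Wsat_mono {w w' : Weight} (h : w.le w') {d : ℝ} (hs : w.sat d) : w'.sat d := by
  obtain ⟨s, v⟩ := w; obtain ⟨s', v'⟩ := w'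
  rcases h with h | h
  · rcases h with h | ⟨hv, hs1, hs2⟩
    · cases v with
      | none => simp [ovLt] at h
      | some c =>
        cases v' with
        | none => exact Wsat_of_val_none rfl d
        | some c' =>
          simp only [ovLt] at h
          have h' : (c : ℝ) < (c' : ℝ) := by exact_mod_cast h
          revert hs
          simp only [Weight.sat]
          cases s <;> cases s' <;> simp <;> intro hs <;> linarith
    · simp only at hv hs1 hs2
      subst hv; subst hs1; subst hs2
      cases v with
      | none => exact Wsat_of_val_none rfl d
      | some c => simp only [Weight.sat] at *; simp_all; linarith
  · rw [← h]; exact hs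

lemma Wsat_add {w w' : Weight} {d e : ℝ} (h : w.sat d) (h' : w'.sat e) :
    (w.add w').sat (d + e) := by
  obtain ⟨s, v⟩ := w; obtain ⟨s', v'⟩ := w'
  cases v with
  | none => exact Wsat_of_val_none (by cases v' <;> simp [Weight.add, ovAdd]) _
  | some c =>
    cases v' with
    | none => exact Wsat_of_val_none (by simp [Weight.add, ovAdd]) _
    | some c' =>
      simp only [Weight.sat, Weight.add, ovAdd] at *
      push_cast
      cases s <;> cases s' <;> simp_all <;> linarith

lemma Wle_val {s s' : Bool} {p q : ℤ} (h : Weight.le ⟨s, some p⟩ ⟨s', some q⟩) :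
    p ≤ q := by
  rcases h with h | h
  · rcases h with h | ⟨hv, _, _⟩
    · have hpq : p < q := h
      omega
    · have hpq : some p = some q := hv
      simp at hpq; omega
  · have hpq : some p = some q := congrArg Weight.val h
    simp at hpq; omega

lemma Wle_none {s s' : Bool} {q : ℤ} (h : Weight.le ⟨s, none⟩ ⟨s', some q⟩) : False := by
  rcases h with h | h
  · rcases h with h | ⟨hv, _, _⟩
    · simp [ovLt] at h
    · simp at hv
  · simp at h

/-- Embedding of integer weights into real weights. -/
def ofW (w : Weight) : RW := ⟨w.strict, w.val.map (fun c => (c : ℝ))⟩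

lemma ofW_sat {w : Weight} {d : ℝ} : (ofW w).sat d ↔ w.sat d := by
  obtain ⟨s, v⟩ := w
  cases v <;> simp [ofW, RW.sat, Weight.sat] <;> cases s <;> simp

lemma ofW_add (w w' : Weight) : ofW (w.add w') = (ofW w).add (ofW w') := by
  obtain ⟨s, v⟩ := w; obtain ⟨s', v'⟩ := w'
  cases v <;> cases v' <;> simp [ofW, Weight.add, ovAdd, RW.add] <;> push_cast <;> ring

lemma ofW_mono {w w' : Weight} (h : w.le w') : RW.le (ofW w) (ofW w') := by
  intro d hd
  rw [ofW_sat] at *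
  exact Wsat_mono h hd

/-! ### Minimum over all clocks -/

noncomputable def listMin : List RW → RW
  | [] => ⟨true, none⟩
  | a :: l => RW.min a (listMin l)

lemma listMin_le {l : List RW} {a : RW} (h : a ∈ l) : RW.le (listMin l) a := by
  induction l with
  | nil => simp at h
  | cons b l ih =>
    rcases List.mem_cons.mp h with h | h
    · subst h; exact RW.min_le_left _ _
    · exact RW.le_trans (RW.min_le_right _ _) (ih h)

lemma listMin_eq_or (l : List RW) :
    listMin l = ⟨true, none⟩ ∨ ∃ a ∈ l, listMin l = a := by
  induction l with
  | nil => exact Or.inl rfl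
  | cons b l ih =>
    rcases RW.min_eq_or b (listMin l) with h | h
    · exact Or.inr ⟨b, List.mem_cons_self, h⟩
    · rcases ih with h' | ⟨a, ha, h'⟩
      · exact Or.inl (by rw [listMin, h, h'])
      · exact Or.inr ⟨a, List.mem_cons_of_mem _ ha, by rw [listMin, h, h']⟩

noncomputable def clockMin {X : Type*} [Fintype X] (f : X → RW) : RW :=
  listMin ((Finset.univ : Finset X).toList.map f)

lemma clockMin_le {X : Type*} [Fintype X] (f : X → RW) (x : X) :
    RW.le (clockMin f) (f x) :=
  listMin_le (List.mem_map_of_mem (f := f) (by simp))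

lemma clockMin_eq_or {X : Type*} [Fintype X] (f : X → RW) :
    clockMin f = ⟨true, none⟩ ∨ ∃ x, clockMin f = f x := by
  rcases listMin_eq_or ((Finset.univ : Finset X).toList.map f) with h | ⟨a, ha, h⟩
  · exact Or.inl h
  · rcases List.mem_map.mp ha with ⟨x, _, rfl⟩
    exact Or.inr ⟨x, h⟩

/-! ### Paths in real-weight graphs -/

def RWpw {X : Type*} (H : Vtx X → Vtx X → RW) : Vtx X → List (Vtx X) → Vtx X → RW
  | a, [], b => H a b
  | a, c :: l, b => (H a c).add (RWpw H c l b)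
/-! ### Choosing a value inside finitely many half-line constraints -/

lemma chooseR {ι : Type*} [Fintype ι] (A B : ι → RW) (α β : ι → ℝ)
    (h : ∀ i j, ((A i).add (B j)).sat (β j - α i)) :
    ∃ r : ℝ, ∀ i, (A i).sat (r - α i) ∧ (B i).sat (β i - r) := by
  classical
  set Lo : Finset ι := Finset.univ.filter (fun j => (B j).val ≠ none) with hLo
  set Up : Finset ι := Finset.univ.filter (fun i => (A i).val ≠ none) with hUp
  have hBval : ∀ j ∈ Lo, ∃ c, (B j).val = some c := by
    intro j hj
    simp only [hLo, Finset.mem_filter] at hj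
    cases h' : (B j).val with
    | none => exact absurd h' hj.2
    | some c => exact ⟨c, rfl⟩
  have hAval : ∀ i ∈ Up, ∃ c, (A i).val = some c := by
    intro i hi
    simp only [hUp, Finset.mem_filter] at hi
    cases h' : (A i).val with
    | none => exact absurd h' hi.2
    | some c => exact ⟨c, rfl⟩
  obtain ⟨lo, hlo⟩ : ∃ lo : ι → ℝ, lo = fun j => β j - ((B j).val.getD 0) := ⟨_, rfl⟩
  obtain ⟨up, hup⟩ : ∃ up : ι → ℝ, up = fun i => α i + ((A i).val.getD 0) := ⟨_, rfl⟩
  -- satisfaction criteria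
  have hBsat : ∀ j r, (j ∈ Lo → (lo j < r ∨ (lo j ≤ r ∧ (B j).strict = false))) →
      (B j).sat (β j - r) := by
    intro j r hr
    by_cases hj : j ∈ Lo
    · obtain ⟨c, hc⟩ := hBval j hj
      have hgd : lo j = β j - c := by rw [hlo]; simp [hc]
      apply RW.sat_of_some hc
      rcases hr hj with h' | ⟨h', hs⟩
      · left; rw [hgd] at h'; linarith
      · right; rw [hgd] at h'; exact ⟨by linarith, hs⟩
    · have : (B j).val = none := by
        simp only [hLo, Finset.mem_filter] at hj
        by_contra hne
        exact hj ⟨Finset.mem_univ j, hne⟩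
      exact RW.sat_of_val_none this _
  have hAsat : ∀ i r, (i ∈ Up → (r < up i ∨ (r ≤ up i ∧ (A i).strict = false))) →
      (A i).sat (r - α i) := by
    intro i r hr
    by_cases hi : i ∈ Up
    · obtain ⟨c, hc⟩ := hAval i hi
      have hgd : up i = α i + c := by rw [hup]; simp [hc]
      apply RW.sat_of_some hc
      rcases hr hi with h' | ⟨h', hs⟩
      · left; rw [hgd] at h'; linarith
      · right; rw [hgd] at h'; exact ⟨by linarith, hs⟩
    · have : (A i).val = none := by
        simp only [hUp, Finset.mem_filter] at hi
        by_contra hne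
        exact hi ⟨Finset.mem_univ i, hne⟩
      exact RW.sat_of_val_none this _
  -- compatibility, numeric
  have hcomp : ∀ i ∈ Up, ∀ j ∈ Lo,
      lo j < up i ∨ (lo j ≤ up i ∧ (A i).strict = false ∧ (B j).strict = false) := by
    intro i hi j hj
    obtain ⟨a, ha⟩ := hAval i hi
    obtain ⟨b, hb⟩ := hBval j hj
    have hadd := RW.add_val ha hb
    have hloj : lo j = β j - b := by rw [hlo]; simp [hb]
    have hupi : up i = α i + a := by rw [hup]; simp [ha]
    rcases RW.sat_some_elim hadd (h i j) with h' | ⟨h', hs⟩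
    · left; rw [hloj, hupi]; linarith
    · right
      rw [RW.add_strict, Bool.or_eq_false_iff] at hs
      exact ⟨by rw [hloj, hupi]; linarith, hs.1, hs.2⟩
  by_cases hLne : Lo.Nonempty
  · obtain ⟨M, hM⟩ := (Lo.image lo).max_of_nonempty (hLne.image lo)
    have hMmem := Finset.mem_image.mp (Finset.mem_of_max hM)
    obtain ⟨j₀, hj₀, hj₀M⟩ := hMmem
    have hMub : ∀ j ∈ Lo, lo j ≤ M := fun j hj =>
      Finset.le_max_of_eq (Finset.mem_image_of_mem lo hj) hM
    by_cases hUne : Up.Nonempty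
    · obtain ⟨m, hm⟩ := (Up.image up).min_of_nonempty (hUne.image up)
      have hmmem := Finset.mem_image.mp (Finset.mem_of_min hm)
      obtain ⟨i₀, hi₀, hi₀m⟩ := hmmem
      have hmlb : ∀ i ∈ Up, m ≤ up i := fun i hi =>
        Finset.min_le_of_eq (Finset.mem_image_of_mem up hi) hm
      have hMm : M ≤ m := by
        rcases hcomp i₀ hi₀ j₀ hj₀ with h' | ⟨h', _⟩ <;>
          rw [← hj₀M, ← hi₀m] <;> linarith
      rcases lt_or_eq_of_le hMm with hlt | heq
      · refine ⟨(M + m) / 2, fun i => ⟨?_, ?_⟩⟩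
        · exact hAsat i _ (fun hi => Or.inl (by have := hmlb i hi; linarith))
        · exact hBsat i _ (fun hj => Or.inl (by have := hMub i hj; linarith))
      · refine ⟨M, fun i => ⟨?_, ?_⟩⟩
        · refine hAsat i _ (fun hi => ?_)
          have h1 := hmlb i hi
          rcases lt_or_eq_of_le h1 with h2 | h2
          · exact Or.inl (by linarith)
          · rcases hcomp i hi j₀ hj₀ with h3 | ⟨h3, h4, _⟩
            · exact Or.inl (by rw [← hj₀M] at *; linarith)
            · exact Or.inr ⟨by rw [heq, h2], h4⟩
        · refine hBsat i _ (fun hj => ?_)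
          have h1 := hMub i hj
          rcases lt_or_eq_of_le h1 with h2 | h2
          · exact Or.inl h2
          · rcases hcomp i₀ hi₀ i hj with h3 | ⟨h3, _, h4⟩
            · exact Or.inl (by rw [← hi₀m] at *; linarith)
            · exact Or.inr ⟨le_of_eq h2, h4⟩
    · refine ⟨M + 1, fun i => ⟨?_, ?_⟩⟩
      · exact hAsat i _ (fun hi => absurd ⟨i, hi⟩ hUne)
      · exact hBsat i _ (fun hj => Or.inl (by have := hMub i hj; linarith))
  · by_cases hUne : Up.Nonempty
    · obtain ⟨m, hm⟩ := (Up.image up).min_of_nonempty (hUne.image up)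
      have hmlb : ∀ i ∈ Up, m ≤ up i := fun i hi =>
        Finset.min_le_of_eq (Finset.mem_image_of_mem up hi) hm
      refine ⟨m - 1, fun i => ⟨?_, ?_⟩⟩
      · exact hAsat i _ (fun hi => Or.inl (by have := hmlb i hi; linarith))
      · exact hBsat i _ (fun hj => absurd ⟨i, hj⟩ hLne)
    · refine ⟨0, fun i => ⟨?_, ?_⟩⟩
      · exact hAsat i _ (fun hi => absurd ⟨i, hi⟩ hUne)
      · exact hBsat i _ (fun hj => absurd ⟨i, hj⟩ hLne)

/-! ### Existence of a solution for a graph with no negative cycle -/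

lemma solve {X : Type*} [Fintype X] (l : List X) (H : Vtx X → Vtx X → RW)
    (hnn : ∀ a L, (RWpw H a L a).sat 0)
    (htr : ∀ a b : Vtx X, ((∀ x, a = some x → x ∈ l) ∧ (∀ x, b = some x → x ∈ l)) ∨
      (H a b).val = none) :
    ∃ v : Val X, ∀ a b, (H a b).sat (extV v b - extV v a) := by
  classical
  induction l generalizing H with
  | nil =>
    refine ⟨fun _ => 0, fun a b => ?_⟩
    rcases htr a b with ⟨ha, hb⟩ | hv
    · have ha' : a = none := by
        cases a with
        | none => rfl
        | some x => exact absurd (ha x rfl) (by simp)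
      have hb' : b = none := by
        cases b with
        | none => rfl
        | some x => exact absurd (hb x rfl) (by simp)
      subst ha'; subst hb'
      have := hnn none []
      simpa [RWpw, extV] using this
    · exact RW.sat_of_val_none hv _
  | cons t l' ih =>
    set H' : Vtx X → Vtx X → RW := fun a b =>
      if a = some t ∨ b = some t then ⟨true, none⟩
      else RW.min (H a b) ((H a (some t)).add (H (some t) b)) with hH'
    -- expansion of H'-paths into H-paths
    have expand : ∀ (L : List (Vtx X)) (a b : Vtx X),
        (∃ L₂, RWpw H a L₂ b = RWpw H' a L b) ∨ (RWpw H' a L b).val = none := by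
      intro L
      induction L with
      | nil =>
        intro a b
        simp only [RWpw]
        by_cases hab : a = some t ∨ b = some t
        · right; rw [hH']; simp [hab]
        · have : H' a b = RW.min (H a b) ((H a (some t)).add (H (some t) b)) := by
            rw [hH']; simp [hab]
          rcases RW.min_eq_or (H a b) ((H a (some t)).add (H (some t) b)) with h' | h'
          · exact Or.inl ⟨[], by rw [this, h']; rfl⟩
          · exact Or.inl ⟨[some t], by rw [this, h']; rfl⟩
      | cons c L ihL =>
        intro a b
        simp only [RWpw]
        by_cases hac : a = some t ∨ c = some t
        · right
          apply RW.add_val_none_left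
          rw [hH']; simp [hac]
        · have hedge : H' a c = RW.min (H a c) ((H a (some t)).add (H (some t) c)) := by
            rw [hH']; simp [hac]
          rcases ihL c b with ⟨L₂, hL₂⟩ | hnone
          · rcases RW.min_eq_or (H a c) ((H a (some t)).add (H (some t) c)) with h' | h'
            · refine Or.inl ⟨c :: L₂, ?_⟩
              simp only [RWpw]
              rw [hL₂, hedge, h']
            · refine Or.inl ⟨some t :: c :: L₂, ?_⟩
              simp only [RWpw]
              rw [hL₂, hedge, h', RW.add_assoc]
          · exact Or.inr (RW.add_val_none_right hnone)
    have hnn' : ∀ a L, (RWpw H' a L a).sat 0 := by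
      intro a L
      rcases expand L a a with ⟨L₂, hL₂⟩ | hnone
      · rw [← hL₂]; exact hnn a L₂
      · exact RW.sat_of_val_none hnone _
    have htr' : ∀ a b : Vtx X, ((∀ x, a = some x → x ∈ l') ∧ (∀ x, b = some x → x ∈ l')) ∨
        (H' a b).val = none := by
      intro a b
      by_cases hab : a = some t ∨ b = some t
      · right; rw [hH']; simp [hab]
      · push_neg at hab
        by_cases hmem : (∀ x, a = some x → x ∈ l') ∧ (∀ x, b = some x → x ∈ l')
        · exact Or.inl hmem
        · right
          have hHab : (H a b).val = none ∧
              ((H a (some t)).val = none ∨ (H (some t) b).val = none) := by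
            rw [not_and_or] at hmem
            rcases hmem with hmem | hmem
            · push_neg at hmem
              obtain ⟨x, hx, hxl⟩ := hmem
              subst hx
              have hxl' : x ∉ t :: l' := by
                simp only [List.mem_cons, not_or]
                exact ⟨fun h => hab.1 (by rw [h]), hxl⟩
              constructor
              · rcases htr (some x) b with ⟨h1, _⟩ | h1
                · exact absurd (h1 x rfl) hxl'
                · exact h1
              · left
                rcases htr (some x) (some t) with ⟨h1, _⟩ | h1
                · exact absurd (h1 x rfl) hxl'
                · exact h1
            · push_neg at hmem
              obtain ⟨x, hx, hxl⟩ := hmem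
              subst hx
              have hxl' : x ∉ t :: l' := by
                simp only [List.mem_cons, not_or]
                exact ⟨fun h => hab.2 (by rw [h]), hxl⟩
              constructor
              · rcases htr a (some x) with ⟨_, h1⟩ | h1
                · exact absurd (h1 x rfl) hxl'
                · exact h1
              · right
                rcases htr (some t) (some x) with ⟨_, h1⟩ | h1
                · exact absurd (h1 x rfl) hxl'
                · exact h1
          have h2 : ((H a (some t)).add (H (some t) b)).val = none := by
            rcases hHab.2 with h' | h'
            · exact RW.add_val_none_left h'
            · exact RW.add_val_none_right h'
          have : H' a b = RW.min (H a b) ((H a (some t)).add (H (some t) b)) := by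
            rw [hH']; simp [hab.1, hab.2]
          rw [this]
          rcases RW.min_eq_or (H a b) ((H a (some t)).add (H (some t) b)) with h' | h' <;>
            rw [h']
          · exact hHab.1
          · exact h2
    obtain ⟨v', hv'⟩ := ih H' hnn' htr'
    -- choose the value of clock t
    set e : Vtx X → ℝ := extV v' with he
    set A : Vtx X → RW := fun a => if a = some t then ⟨true, none⟩ else H a (some t) with hA
    set B : Vtx X → RW := fun b => if b = some t then ⟨true, none⟩ else H (some t) b with hB
    have hcomp : ∀ a b, ((A a).add (B b)).sat (e b - e a) := by
      intro a b
      by_cases hab : a = some t ∨ b = some t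
      · apply RW.sat_of_val_none
        rcases hab with h' | h'
        · exact RW.add_val_none_left (by rw [hA]; simp [h'])
        · exact RW.add_val_none_right (by rw [hB]; simp [h'])
      · push_neg at hab
        have hA' : A a = H a (some t) := by rw [hA]; simp [hab.1]
        have hB' : B b = H (some t) b := by rw [hB]; simp [hab.2]
        rw [hA', hB']
        have := hv' a b
        have hH'ab : H' a b = RW.min (H a b) ((H a (some t)).add (H (some t) b)) := by
          rw [hH']; simp [hab.1, hab.2]
        rw [hH'ab] at this
        exact (RW.min_sat_iff.mp this).2
    obtain ⟨r, hr⟩ := chooseR A B e e hcomp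
    refine ⟨fun x => if x = t then r else v' x, fun a b => ?_⟩
    have hext : ∀ a : Vtx X, a ≠ some t →
        extV (fun x => if x = t then r else v' x) a = e a := by
      intro a ha
      cases a with
      | none => rfl
      | some x =>
        have : x ≠ t := fun h => ha (by rw [h])
        simp [extV, this, he]
    have hextt : extV (fun x => if x = t then r else v' x) (some t) = r := by
      simp [extV]
    by_cases hat : a = some t <;> by_cases hbt : b = some t
    · subst hat; subst hbt
      rw [hextt, sub_self]
      have := hnn (some t) []
      simpa [RWpw] using this
    · subst hat
      rw [hextt, hext b hbt]
      have := (hr b).2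
      rw [hB] at this
      simp only [if_neg hbt] at this
      exact this
    · subst hbt
      rw [hextt, hext a hat]
      have := (hr a).1
      rw [hA] at this
      simp only [if_neg hat] at this
      exact this
    · rw [hext a hat, hext b hbt]
      have := hv' a b
      have hH'ab : H' a b = RW.min (H a b) ((H a (some t)).add (H (some t) b)) := by
        rw [hH']; simp [hat, hbt]
      rw [hH'ab] at this
      exact (RW.min_sat_iff.mp this).1
/-! ### More weight lemmas -/

lemma Wle_val2 {w w' : Weight} {p q : ℤ} (hp : w.val = some p) (hq : w'.val = some q)
    (h : w.le w') : p ≤ q := by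
  obtain ⟨s, v⟩ := w; obtain ⟨s', v'⟩ := w'
  have hp' : v = some p := hp
  have hq' : v' = some q := hq
  subst hp'; subst hq'
  exact Wle_val h

lemma Wle_none2 {w w' : Weight} {q : ℤ} (hp : w.val = none) (hq : w'.val = some q)
    (h : w.le w') : False := by
  obtain ⟨s, v⟩ := w; obtain ⟨s', v'⟩ := w'
  have hp' : v = none := hp
  have hq' : v' = some q := hq
  subst hp'; subst hq'
  exact Wle_none h

lemma Wsat_elim {w : Weight} {c : ℤ} {d : ℝ} (hc : w.val = some c) (h : w.sat d) :
    d < (c : ℝ) ∨ (d ≤ (c : ℝ) ∧ w.strict = false) := by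
  obtain ⟨s, v⟩ := w
  have hc' : v = some c := hc
  subst hc'
  simp only [Weight.sat] at h
  cases s
  · simp at h; exact Or.inr ⟨h, rfl⟩
  · simp at h; exact Or.inl h

lemma Wsat_elim_le {w : Weight} {c : ℤ} {d : ℝ} (hc : w.val = some c) (h : w.sat d) :
    d ≤ (c : ℝ) := by
  rcases Wsat_elim hc h with h' | ⟨h', _⟩
  · exact le_of_lt h'
  · exact h'

lemma RW.sat0_two {a b : RW} {x y : ℝ} (ha : a.val = some x) (hb : b.val = some y)
    (h : 0 < x + y ∨ (0 ≤ x + y ∧ a.strict = false ∧ b.strict = false)) :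
    (a.add b).sat 0 := by
  apply RW.sat_of_some (RW.add_val ha hb)
  rcases h with h | ⟨h, h1, h2⟩
  · exact Or.inl h
  · exact Or.inr ⟨h, by rw [RW.add_strict, h1, h2]; rfl⟩

lemma RW.sat0_three {a b c : RW} {x y z : ℝ} (ha : a.val = some x) (hb : b.val = some y)
    (hc : c.val = some z)
    (h : 0 < x + y + z ∨
      (0 ≤ x + y + z ∧ a.strict = false ∧ b.strict = false ∧ c.strict = false)) :
    (a.add (b.add c)).sat 0 := by
  apply RW.sat0_two ha (RW.add_val hb hc)
  rcases h with h | ⟨h, h1, h2, h3⟩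
  · exact Or.inl (by linarith)
  · exact Or.inr ⟨by linarith, h1, by rw [RW.add_strict, h2, h3]; rfl⟩

lemma RW.sat0_mono {a b : RW} (h : RW.le a b) (ha : a.sat 0) : b.sat 0 := h 0 ha

/-! ### Helpers on bounds -/

lemma lbLtR_bot (r : ℝ) : lbLtR ⊥ r := by
  intro n hn
  exact absurd hn.symm (WithBot.coe_ne_bot)

lemma not_lbLtR {l : WithBot ℕ} {r : ℝ} (h : ¬ lbLtR l r) :
    ∃ n : ℕ, l = (n : WithBot ℕ) ∧ r ≤ (n : ℝ) := by
  unfold lbLtR at h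
  push_neg at h
  obtain ⟨n, hn, hr⟩ := h
  exact ⟨n, hn, hr⟩

/-! ### The box edges and the closure graph -/

section Closure

variable {X : Type*} [Fintype X] (L U : X → WithBot ℕ) (G : DGraph X) (ν : Val X)

/-- Upper box edge for clock `x` (edge `0 → x`). -/
noncomputable def upE (x : X) : RW :=
  if lbLtR (U x) (ν x) then ⟨true, none⟩ else ⟨false, some (ν x)⟩

/-- Lower box edge for clock `x` (edge `x → 0`). -/
noncomputable def loE (x : X) : RW :=
  if lbLtR (L x) (ν x) then
    WithBot.recBotCoe ⟨true, none⟩ (fun n => ⟨true, some (-(n : ℝ))⟩) (L x)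
  else ⟨false, some (-(ν x))⟩

lemma loE_cases (x : X) :
    (loE L ν x = ⟨false, some (-(ν x))⟩ ∧ ∃ n : ℕ, L x = (n : WithBot ℕ) ∧ ν x ≤ (n : ℝ)) ∨
    (loE L ν x = ⟨true, none⟩ ∧ L x = ⊥) ∨
    (∃ n : ℕ, loE L ν x = ⟨true, some (-(n : ℝ))⟩ ∧ L x = (n : WithBot ℕ) ∧ (n : ℝ) < ν x) := by
  by_cases h : lbLtR (L x) (ν x)
  · cases hL : L x with
    | bot => exact Or.inr (Or.inl ⟨by rw [loE, if_pos h, hL]; rfl, rfl⟩)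
    | coe n =>
      exact Or.inr (Or.inr ⟨n, by rw [loE, if_pos h, hL]; rfl, rfl, h n hL⟩)
  · obtain ⟨n, hn, hr⟩ := not_lbLtR h
    exact Or.inl ⟨by simp [loE, h], n, hn, hr⟩

/-- Closure lower distance from `x` to `0`. -/
noncomputable def Pg (x : X) : RW :=
  RW.min (ofW (G (some x) none))
    (RW.min (loE L ν x)
      (clockMin fun y => (ofW (G (some x) (some y))).add (loE L ν y)))

/-- Closure upper distance from `0` to `y`. -/
noncomputable def Qg (y : X) : RW :=
  RW.min (ofW (G none (some y)))
    (RW.min (upE U ν y)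
      (clockMin fun x => (upE U ν x).add (ofW (G (some x) (some y)))))

lemma Pg_le_G (x : X) : RW.le (Pg L G ν x) (ofW (G (some x) none)) := RW.min_le_left _ _

lemma Pg_le_loE (x : X) : RW.le (Pg L G ν x) (loE L ν x) :=
  RW.le_trans (RW.min_le_right _ _) (RW.min_le_left _ _)

lemma Pg_le_mid (x y : X) :
    RW.le (Pg L G ν x) ((ofW (G (some x) (some y))).add (loE L ν y)) :=
  RW.le_trans (RW.min_le_right _ _) (RW.le_trans (RW.min_le_right _ _) (clockMin_le _ y))

lemma Qg_le_G (y : X) : RW.le (Qg U G ν y) (ofW (G none (some y))) := RW.min_le_left _ _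

lemma Qg_le_upE (y : X) : RW.le (Qg U G ν y) (upE U ν y) :=
  RW.le_trans (RW.min_le_right _ _) (RW.min_le_left _ _)

lemma Qg_le_mid (y x : X) :
    RW.le (Qg U G ν y) ((upE U ν x).add (ofW (G (some x) (some y)))) :=
  RW.le_trans (RW.min_le_right _ _) (RW.le_trans (RW.min_le_right _ _) (clockMin_le _ x))

lemma Pg_forms (x : X) :
    Pg L G ν x = ofW (G (some x) none) ∨ Pg L G ν x = loE L ν x ∨
    Pg L G ν x = ⟨true, none⟩ ∨
    ∃ y, Pg L G ν x = (ofW (G (some x) (some y))).add (loE L ν y) := by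
  unfold Pg
  rcases RW.min_eq_or (ofW (G (some x) none)) _ with h | h
  · exact Or.inl h
  · rw [h]
    rcases RW.min_eq_or (loE L ν x) _ with h' | h'
    · exact Or.inr (Or.inl h')
    · rw [h']
      rcases clockMin_eq_or (fun y => (ofW (G (some x) (some y))).add (loE L ν y)) with h'' | ⟨y, h''⟩
      · exact Or.inr (Or.inr (Or.inl h''))
      · exact Or.inr (Or.inr (Or.inr ⟨y, h''⟩))

lemma Qg_forms (y : X) :
    Qg U G ν y = ofW (G none (some y)) ∨ Qg U G ν y = upE U ν y ∨
    Qg U G ν y = ⟨true, none⟩ ∨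
    ∃ x, Qg U G ν y = (upE U ν x).add (ofW (G (some x) (some y))) := by
  unfold Qg
  rcases RW.min_eq_or (ofW (G none (some y))) _ with h | h
  · exact Or.inl h
  · rw [h]
    rcases RW.min_eq_or (upE U ν y) _ with h' | h'
    · exact Or.inr (Or.inl h')
    · rw [h']
      rcases clockMin_eq_or (fun x => (upE U ν x).add (ofW (G (some x) (some y)))) with h'' | ⟨x, h''⟩
      · exact Or.inr (Or.inr (Or.inl h''))
      · exact Or.inr (Or.inr (Or.inr ⟨x, h''⟩))

/-- The combined closure graph. -/
noncomputable def Bg : Vtx X → Vtx X → RW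
  | some x, some y => RW.min (ofW (G (some x) (some y))) ((Pg L G ν x).add (Qg U G ν y))
  | some x, none => Pg L G ν x
  | none, some y => Qg U G ν y
  | none, none => RW.rw0

end Closure
lemma Wadd_val {w w' : Weight} {c c' : ℤ} (h : w.val = some c) (h' : w'.val = some c') :
    (w.add w').val = some (c + c') := by
  simp [Weight.add, ovAdd, h, h']

section Basics

variable {X : Type*} [Fintype X] {L U : X → WithBot ℕ} {G : DGraph X} {ν : Val X}
variable (hTri : ∀ a b c, (G a b).le ((G a c).add (G c b)))
variable (hGaa : ∀ a, Weight.sat (G a a) 0)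
variable (hν1 : Nonneg ν)
variable (hν2 : ∀ a b, ((extraLU L U G) a b).sat (extV ν b - extV ν a))

include hν2 in
lemma notPx {x : X} {m : ℕ} (hm : U x = (m : WithBot ℕ)) (hmx : ν x ≤ (m : ℝ)) :
    ¬ negGtLB (G (some x) none) (U x) := by
  intro hPx
  have h0 := hν2 (some x) none
  simp only [extraLU, if_pos hPx] at h0
  rw [hm, show wltNeg ((m:ℕ) : WithBot ℕ) = ⟨true, some (-(m:ℤ))⟩ from rfl] at h0
  have hx : (0:ℝ) - ν x < ((-(m:ℤ)):ℝ) := by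
    simpa [Weight.sat, extV] using h0
  push_cast at hx
  linarith

include hν2 in
lemma basicE (x : X) : ((upE U ν x).add (ofW (G (some x) none))).sat 0 := by
  by_cases hU : lbLtR (U x) (ν x)
  · exact RW.sat_of_val_none (RW.add_val_none_left (by simp [upE, hU])) 0
  obtain ⟨m, hm, hmx⟩ := not_lbLtR hU
  have hupE : upE U ν x = ⟨false, some (ν x)⟩ := by simp [upE, hU]
  have hPx := notPx hν2 hm hmx
  have h0 := hν2 (some x) none
  simp only [extraLU, if_neg hPx] at h0
  cases hGv : (G (some x) none).val with
  | none => exact RW.sat_of_val_none (RW.add_val_none_right (by simp [ofW, hGv])) 0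
  | some c =>
    apply RW.sat0_two (x := ν x) (y := ((c:ℤ):ℝ)) (by rw [hupE]) (by simp [ofW, hGv])
    have h1 := Wsat_elim hGv h0
    simp only [extV, zero_sub] at h1
    rcases h1 with h1 | ⟨h1, h1s⟩
    · left; linarith
    · right
      refine ⟨by linarith, by rw [hupE], ?_⟩
      show (G (some x) none).strict = false
      exact h1s

include hTri hGaa hν2 in
lemma basicD (z : X) : ((ofW (G none (some z))).add (loE L ν z)).sat 0 := by
  cases hGv : (G none (some z)).val with
  | none => exact RW.sat_of_val_none (RW.add_val_none_left (by simp [ofW, hGv])) 0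
  | some c =>
  have h0 := hν2 none (some z)
  simp only [extraLU] at h0
  rcases loE_cases L ν z with ⟨hlo, n, hn, hnz⟩ | ⟨hlo, _⟩ | ⟨n, hlo, hn, hnz⟩
  · -- loE = (≤, -ν z), ν z ≤ n
    have key : (ν z < ((c:ℤ):ℝ)) ∨ (ν z ≤ ((c:ℤ):ℝ) ∧ (G none (some z)).strict = false) := by
      by_cases hcond : gtLB (G none (some z)) (L z) ∨ negGtLB (G (some z) none) (L z)
      · rcases hcond with hg | hQ
        · have hnc : (n:ℤ) < c := by have := hg n hn; rwa [hGv] at this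
          left
          have hr : ((n:ℤ):ℝ) < ((c:ℤ):ℝ) := by exact_mod_cast hnc
          push_cast at hr
          linarith
        · obtain ⟨c', hc', hlt⟩ := hQ
          have hcc' : c' < -(n:ℤ) := hlt n hn
          have htri := hTri none none (some z)
          cases hG00 : (G none none).val with
          | none => exact (Wle_none2 hG00 (Wadd_val hGv hc') htri).elim
          | some c₀ =>
            have h1 : c₀ ≤ c + c' := Wle_val2 hG00 (Wadd_val hGv hc') htri
            have h2r : (0:ℝ) ≤ ((c₀:ℤ):ℝ) := Wsat_elim_le hG00 (hGaa none)
            have h2 : (0:ℤ) ≤ c₀ := by exact_mod_cast h2r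
            left
            have hnc : (n:ℤ) < c := by omega
            have hr : ((n:ℤ):ℝ) < ((c:ℤ):ℝ) := by exact_mod_cast hnc
            push_cast at hr
            linarith
      · rw [if_neg hcond] at h0
        have h1 := Wsat_elim hGv h0
        simp only [extV, sub_zero] at h1
        exact h1
    rw [hlo]
    rcases key with h' | ⟨h', hs⟩
    · exact RW.sat0_two (x := ((c:ℤ):ℝ)) (y := -(ν z)) (by simp [ofW, hGv]) rfl
        (Or.inl (by linarith))
    · refine RW.sat0_two (x := ((c:ℤ):ℝ)) (y := -(ν z)) (by simp [ofW, hGv]) rfl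
        (Or.inr ⟨by linarith, ?_, rfl⟩)
      show (G none (some z)).strict = false
      exact hs
  · exact RW.sat_of_val_none (RW.add_val_none_right (by rw [hlo])) 0
  · -- loE = (<, -n), n < ν z
    have key : ((n:ℕ):ℝ) < ((c:ℤ):ℝ) := by
      by_cases hcond : gtLB (G none (some z)) (L z) ∨ negGtLB (G (some z) none) (L z)
      · rcases hcond with hg | hQ
        · have hnc : (n:ℤ) < c := by have := hg n hn; rwa [hGv] at this
          exact_mod_cast hnc
        · obtain ⟨c', hc', hlt⟩ := hQ
          have hcc' : c' < -(n:ℤ) := hlt n hn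
          have htri := hTri none none (some z)
          cases hG00 : (G none none).val with
          | none => exact (Wle_none2 hG00 (Wadd_val hGv hc') htri).elim
          | some c₀ =>
            have h1 : c₀ ≤ c + c' := Wle_val2 hG00 (Wadd_val hGv hc') htri
            have h2r : (0:ℝ) ≤ ((c₀:ℤ):ℝ) := Wsat_elim_le hG00 (hGaa none)
            have h2 : (0:ℤ) ≤ c₀ := by exact_mod_cast h2r
            have hnc : (n:ℤ) < c := by omega
            exact_mod_cast hnc
      · rw [if_neg hcond] at h0
        have h1 := Wsat_elim_le hGv h0
        simp only [extV, sub_zero] at h1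
        linarith
    rw [hlo]
    exact RW.sat0_two (x := ((c:ℤ):ℝ)) (y := -((n:ℕ):ℝ)) (by simp [ofW, hGv]) rfl
      (Or.inl (by linarith))

include hν1 hν2 in
lemma basicB (x : X) : ((upE U ν x).add (loE L ν x)).sat 0 := by
  by_cases hU : lbLtR (U x) (ν x)
  · exact RW.sat_of_val_none (RW.add_val_none_left (by simp [upE, hU])) 0
  have hupE : upE U ν x = ⟨false, some (ν x)⟩ := by simp [upE, hU]
  rcases loE_cases L ν x with ⟨hlo, n, hn, hnz⟩ | ⟨hlo, _⟩ | ⟨n, hlo, hn, hnz⟩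
  · rw [hupE, hlo]
    exact RW.sat0_two rfl rfl (Or.inr ⟨by linarith, rfl, rfl⟩)
  · exact RW.sat_of_val_none (RW.add_val_none_right (by rw [hlo])) 0
  · rw [hupE, hlo]
    refine RW.sat0_two rfl rfl (Or.inl ?_)
    have := hν1 x
    linarith

include hTri hν1 hν2 in
lemma basicC (x z : X) :
    ((upE U ν x).add ((ofW (G (some x) (some z))).add (loE L ν z))).sat 0 := by
  by_cases hU : lbLtR (U x) (ν x)
  · exact RW.sat_of_val_none (RW.add_val_none_left (by simp [upE, hU])) 0
  obtain ⟨m, hm, hmx⟩ := not_lbLtR hU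
  have hupE : upE U ν x = ⟨false, some (ν x)⟩ := by simp [upE, hU]
  have hPx := notPx hν2 hm hmx
  have h0 := hν2 (some x) none
  simp only [extraLU, if_neg hPx] at h0
  cases hGv : (G (some x) (some z)).val with
  | none =>
    exact RW.sat_of_val_none
      (RW.add_val_none_right (RW.add_val_none_left (by simp [ofW, hGv]))) 0
  | some c =>
  have hxz := hν2 (some x) (some z)
  simp only [extraLU] at hxz
  rcases loE_cases L ν z with ⟨hlo, n, hn, hnz⟩ | ⟨hlo, _⟩ | ⟨n, hlo, hn, hnz⟩
  · -- loE = (≤, -ν z), ν z ≤ n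
    have key : (ν z - ν x < ((c:ℤ):ℝ)) ∨
        (ν z - ν x ≤ ((c:ℤ):ℝ) ∧ (G (some x) (some z)).strict = false) := by
      by_cases hcond : gtLB (G (some x) (some z)) (L z) ∨
          negGtLB (G (some z) none) (L z) ∨ negGtLB (G (some x) none) (U x)
      · rcases hcond with hg | hQ | hP
        · have hnc : (n:ℤ) < c := by have := hg n hn; rwa [hGv] at this
          left
          have hr : ((n:ℤ):ℝ) < ((c:ℤ):ℝ) := by exact_mod_cast hnc
          push_cast at hr
          have := hν1 x
          linarith
        · obtain ⟨c', hc', hlt⟩ := hQ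
          have hcc' : c' < -(n:ℤ) := hlt n hn
          have htri := hTri (some x) none (some z)
          cases hG0 : (G (some x) none).val with
          | none => exact (Wle_none2 hG0 (Wadd_val hGv hc') htri).elim
          | some c₀ =>
            have h1 : c₀ ≤ c + c' := Wle_val2 hG0 (Wadd_val hGv hc') htri
            have h2 : (0:ℝ) - ν x ≤ ((c₀:ℤ):ℝ) := Wsat_elim_le hG0 h0
            left
            have h1' : ((c₀:ℤ):ℝ) ≤ ((c:ℤ):ℝ) + ((c':ℤ):ℝ) := by exact_mod_cast h1
            have hcc'' : ((c':ℤ):ℝ) < -((n:ℤ):ℝ) := by exact_mod_cast hcc'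
            push_cast at h1' hcc'' ⊢
            linarith
        · exact absurd hP hPx
      · rw [if_neg hcond] at hxz
        have h1 := Wsat_elim hGv hxz
        simp only [extV] at h1
        exact h1
    rw [hlo]
    rcases key with h' | ⟨h', hs⟩
    · exact RW.sat0_three (x := ν x) (y := ((c:ℤ):ℝ)) (z := -(ν z))
        (by rw [hupE]) (by simp [ofW, hGv]) rfl (Or.inl (by linarith))
    · refine RW.sat0_three (x := ν x) (y := ((c:ℤ):ℝ)) (z := -(ν z))
        (by rw [hupE]) (by simp [ofW, hGv]) rfl
        (Or.inr ⟨by linarith, by rw [hupE], ?_, rfl⟩)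
      show (G (some x) (some z)).strict = false
      exact hs
  · exact RW.sat_of_val_none
      (RW.add_val_none_right (RW.add_val_none_right (by rw [hlo]))) 0
  · -- loE = (<, -n), n < ν z
    have key : ((n:ℕ):ℝ) - ν x < ((c:ℤ):ℝ) := by
      by_cases hcond : gtLB (G (some x) (some z)) (L z) ∨
          negGtLB (G (some z) none) (L z) ∨ negGtLB (G (some x) none) (U x)
      · rcases hcond with hg | hQ | hP
        · have hnc : (n:ℤ) < c := by have := hg n hn; rwa [hGv] at this
          have hr : ((n:ℤ):ℝ) < ((c:ℤ):ℝ) := by exact_mod_cast hnc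
          push_cast at hr
          have := hν1 x
          linarith
        · obtain ⟨c', hc', hlt⟩ := hQ
          have hcc' : c' < -(n:ℤ) := hlt n hn
          have htri := hTri (some x) none (some z)
          cases hG0 : (G (some x) none).val with
          | none => exact (Wle_none2 hG0 (Wadd_val hGv hc') htri).elim
          | some c₀ =>
            have h1 : c₀ ≤ c + c' := Wle_val2 hG0 (Wadd_val hGv hc') htri
            have h2 : (0:ℝ) - ν x ≤ ((c₀:ℤ):ℝ) := Wsat_elim_le hG0 h0
            have h1' : ((c₀:ℤ):ℝ) ≤ ((c:ℤ):ℝ) + ((c':ℤ):ℝ) := by exact_mod_cast h1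
            have hcc'' : ((c':ℤ):ℝ) < -((n:ℤ):ℝ) := by exact_mod_cast hcc'
            push_cast at hcc''
            linarith
        · exact absurd hP hPx
      · rw [if_neg hcond] at hxz
        have h1 := Wsat_elim_le hGv hxz
        simp only [extV] at h1
        linarith
    rw [hlo]
    exact RW.sat0_three (x := ν x) (y := ((c:ℤ):ℝ)) (z := -((n:ℕ):ℝ))
      (by rw [hupE]) (by simp [ofW, hGv]) rfl (Or.inl (by linarith))

end Basics
section Triangles

variable {X : Type*} [Fintype X] {L U : X → WithBot ℕ} {G : DGraph X} {ν : Val X}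
variable (hTri : ∀ a b c, (G a b).le ((G a c).add (G c b)))
variable (hGaa : ∀ a, Weight.sat (G a a) 0)
variable (hν1 : Nonneg ν)
variable (hν2 : ∀ a b, ((extraLU L U G) a b).sat (extV ν b - extV ν a))

include hTri in
lemma RTri (a b c : Vtx X) : RW.le (ofW (G a b)) ((ofW (G a c)).add (ofW (G c b))) := by
  rw [← ofW_add]; exact ofW_mono (hTri a b c)

include hGaa in
lemma hGaa' (a : Vtx X) : (ofW (G a a)).sat 0 := ofW_sat.mpr (hGaa a)

include hTri hGaa hν1 hν2 in
lemma lemK (y : X) : ((Qg U G ν y).add (Pg L G ν y)).sat 0 := by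
  rcases Qg_forms U G ν y with hq | hq | hq | ⟨z, hq⟩ <;>
    rcases Pg_forms L G ν y with hp | hp | hp | ⟨w, hp⟩ <;> rw [hq, hp]
  · exact RW.sat0_mono (RTri hTri none none (some y)) (hGaa' hGaa none)
  · exact basicD hTri hGaa hν2 y
  · exact RW.sat_of_val_none (RW.add_val_none_right rfl) 0
  · rw [← RW.add_assoc]
    exact RW.sat0_mono (RW.add_mono_left (RTri hTri none (some w) (some y)))
      (basicD hTri hGaa hν2 w)
  · exact basicE hν2 y
  · exact basicB hν1 hν2 y
  · exact RW.sat_of_val_none (RW.add_val_none_right rfl) 0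
  · exact basicC hTri hν1 hν2 y w
  · exact RW.sat_of_val_none (RW.add_val_none_left rfl) 0
  · exact RW.sat_of_val_none (RW.add_val_none_left rfl) 0
  · exact RW.sat_of_val_none (RW.add_val_none_left rfl) 0
  · exact RW.sat_of_val_none (RW.add_val_none_left rfl) 0
  · rw [RW.add_assoc]
    exact RW.sat0_mono (RW.add_mono_right (RTri hTri (some z) none (some y)))
      (basicE hν2 z)
  · rw [RW.add_assoc]
    exact basicC hTri hν1 hν2 z y
  · exact RW.sat_of_val_none (RW.add_val_none_right rfl) 0
  · rw [RW.add_assoc, ← RW.add_assoc (ofW (G (some z) (some y)))]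
    exact RW.sat0_mono
      (RW.add_mono_right (RW.add_mono_left (RTri hTri (some z) (some w) (some y))))
      (basicC hTri hν1 hν2 z w)

include hTri in
lemma lemTP (x z : X) :
    RW.le (Pg L G ν x) ((ofW (G (some x) (some z))).add (Pg L G ν z)) := by
  rcases Pg_forms L G ν z with hp | hp | hp | ⟨w, hp⟩ <;> rw [hp]
  · exact RW.le_trans (Pg_le_G L G ν x) (RTri hTri (some x) none (some z))
  · exact Pg_le_mid L G ν x z
  · exact RW.le_of_val_none (RW.add_val_none_right rfl)
  · refine RW.le_trans (Pg_le_mid L G ν x w) ?_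
    rw [← RW.add_assoc]
    exact RW.add_mono_left (RTri hTri (some x) (some w) (some z))

include hTri in
lemma lemTQ (z y : X) :
    RW.le (Qg U G ν y) ((Qg U G ν z).add (ofW (G (some z) (some y)))) := by
  rcases Qg_forms U G ν z with hq | hq | hq | ⟨w, hq⟩ <;> rw [hq]
  · exact RW.le_trans (Qg_le_G U G ν y) (RTri hTri none (some y) (some z))
  · exact Qg_le_mid U G ν y z
  · exact RW.le_of_val_none (RW.add_val_none_left rfl)
  · refine RW.le_trans (Qg_le_mid U G ν y w) ?_
    rw [RW.add_assoc]
    exact RW.add_mono_right (RTri hTri (some w) (some y) (some z))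

include hTri hGaa hν1 hν2 in
lemma Btri (a b c : Vtx X) :
    RW.le (Bg L U G ν a c) ((Bg L U G ν a b).add (Bg L U G ν b c)) := by
  have hK : ∀ z : X, RW.le RW.rw0 ((Qg U G ν z).add (Pg L G ν z)) :=
    fun z => RW.le_rw0_of_sat0 (lemK hTri hGaa hν1 hν2 z)
  cases a with
  | none =>
    cases c with
    | none =>
      cases b with
      | none =>
        show RW.le RW.rw0 (RW.rw0.add RW.rw0)
        rw [RW.add_rw0]; exact RW.le_refl _
      | some z =>
        show RW.le RW.rw0 ((Qg U G ν z).add (Pg L G ν z))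
        exact hK z
    | some y =>
      cases b with
      | none =>
        show RW.le (Qg U G ν y) (RW.rw0.add (Qg U G ν y))
        rw [RW.rw0_add]; exact RW.le_refl _
      | some z =>
        show RW.le (Qg U G ν y) ((Qg U G ν z).add (Bg L U G ν (some z) (some y)))
        rcases RW.min_eq_or (ofW (G (some z) (some y)))
          ((Pg L G ν z).add (Qg U G ν y)) with h | h
        · show RW.le (Qg U G ν y)
            ((Qg U G ν z).add (RW.min (ofW (G (some z) (some y)))
              ((Pg L G ν z).add (Qg U G ν y))))
          rw [h]
          exact lemTQ hTri z y
        · show RW.le (Qg U G ν y)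
            ((Qg U G ν z).add (RW.min (ofW (G (some z) (some y)))
              ((Pg L G ν z).add (Qg U G ν y))))
          rw [h]
          have s1 : RW.le (Qg U G ν y) (RW.rw0.add (Qg U G ν y)) := by
            rw [RW.rw0_add]; exact RW.le_refl _
          have s2 := RW.add_mono_left (b := Qg U G ν y) (hK z)
          have s3 := RW.le_trans s1 s2
          rwa [RW.add_assoc] at s3
  | some x =>
    cases c with
    | none =>
      cases b with
      | none =>
        show RW.le (Pg L G ν x) ((Pg L G ν x).add RW.rw0)
        rw [RW.add_rw0]; exact RW.le_refl _
      | some z =>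
        show RW.le (Pg L G ν x) ((Bg L U G ν (some x) (some z)).add (Pg L G ν z))
        rcases RW.min_eq_or (ofW (G (some x) (some z)))
          ((Pg L G ν x).add (Qg U G ν z)) with h | h
        · show RW.le (Pg L G ν x)
            ((RW.min (ofW (G (some x) (some z)))
              ((Pg L G ν x).add (Qg U G ν z))).add (Pg L G ν z))
          rw [h]
          exact lemTP hTri x z
        · show RW.le (Pg L G ν x)
            ((RW.min (ofW (G (some x) (some z)))
              ((Pg L G ν x).add (Qg U G ν z))).add (Pg L G ν z))
          rw [h]
          have s1 : RW.le (Pg L G ν x) ((Pg L G ν x).add RW.rw0) := by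
            rw [RW.add_rw0]; exact RW.le_refl _
          have s2 := RW.add_mono_right (a := Pg L G ν x) (hK z)
          have s3 := RW.le_trans s1 s2
          rwa [← RW.add_assoc] at s3
    | some y =>
      cases b with
      | none =>
        show RW.le (Bg L U G ν (some x) (some y)) ((Pg L G ν x).add (Qg U G ν y))
        exact RW.min_le_right _ _
      | some z =>
        show RW.le (Bg L U G ν (some x) (some y))
          ((Bg L U G ν (some x) (some z)).add (Bg L U G ν (some z) (some y)))
        have hxy : RW.le (Bg L U G ν (some x) (some y))
            ((Pg L G ν x).add (Qg U G ν y)) := RW.min_le_right _ _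
        have hxyG : RW.le (Bg L U G ν (some x) (some y))
            (ofW (G (some x) (some y))) := RW.min_le_left _ _
        rcases RW.min_eq_or (ofW (G (some x) (some z)))
          ((Pg L G ν x).add (Qg U G ν z)) with h1 | h1 <;>
          rcases RW.min_eq_or (ofW (G (some z) (some y)))
            ((Pg L G ν z).add (Qg U G ν y)) with h2 | h2 <;>
          show RW.le (Bg L U G ν (some x) (some y))
            ((RW.min (ofW (G (some x) (some z))) ((Pg L G ν x).add (Qg U G ν z))).add
              (RW.min (ofW (G (some z) (some y))) ((Pg L G ν z).add (Qg U G ν y)))) <;>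
          rw [h1, h2]
        · exact RW.le_trans hxyG (RTri hTri (some x) (some y) (some z))
        · refine RW.le_trans hxy ?_
          have s2 := RW.add_mono_left (b := Qg U G ν y) (lemTP (L := L) (ν := ν) hTri x z)
          rwa [RW.add_assoc] at s2
        · refine RW.le_trans hxy ?_
          have s2 := RW.add_mono_right (a := Pg L G ν x) (lemTQ (U := U) (ν := ν) hTri z y)
          rwa [← RW.add_assoc] at s2
        · refine RW.le_trans hxy ?_
          have s1 : RW.le ((Pg L G ν x).add (Qg U G ν y))
              ((Pg L G ν x).add (RW.rw0.add (Qg U G ν y))) := by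
            rw [RW.rw0_add]; exact RW.le_refl _
          have s2 := RW.add_mono_right (a := Pg L G ν x)
            (RW.add_mono_left (b := Qg U G ν y) (hK z))
          have s3 := RW.le_trans s1 s2
          rw [RW.add_assoc] at s3
          rw [RW.add_assoc]
          exact s3

include hTri hGaa hν1 hν2 in
lemma Bsat0 (a : Vtx X) : (Bg L U G ν a a).sat 0 := by
  cases a with
  | none =>
    show RW.rw0.sat 0
    simp [RW.sat, RW.rw0]
  | some x =>
    show (RW.min (ofW (G (some x) (some x))) ((Pg L G ν x).add (Qg U G ν x))).sat 0
    rcases RW.min_eq_or (ofW (G (some x) (some x)))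
      ((Pg L G ν x).add (Qg U G ν x)) with h | h <;> rw [h]
    · exact hGaa' hGaa (some x)
    · rw [RW.add_comm]
      exact lemK hTri hGaa hν1 hν2 x

include hTri hGaa hν1 hν2 in
lemma pw_ge (l : List (Vtx X)) (a b : Vtx X) :
    RW.le (Bg L U G ν a b) (RWpw (Bg L U G ν) a l b) := by
  induction l generalizing a with
  | nil => exact RW.le_refl _
  | cons c l ih =>
    exact RW.le_trans (Btri hTri hGaa hν1 hν2 a c b) (RW.add_mono_right (ih c))

include hTri hGaa hν1 hν2 in
lemma NoNegB (a : Vtx X) (l : List (Vtx X)) : (RWpw (Bg L U G ν) a l a).sat 0 :=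
  RW.sat0_mono (pw_ge hTri hGaa hν1 hν2 l a a) (Bsat0 hTri hGaa hν1 hν2 a)

end Triangles

/-- For every zone `Z` (with canonical distance graph `G`) and
bound functions `L, U : X → ℕ ∪ {−∞}`: `Extra⁺_{LU}(Z) ⊆ a_{≼LU}(Z)`. -/
theorem stmt11 {X : Type*} [Fintype X] (L U : X → WithBot ℕ)
    (Z : Set (Val X)) (hZ : IsZone Z) (G : DGraph X) (hG : IsCanonGraph G Z) :
    sem (extraLU L U G) ⊆ aLU L U Z := by
  obtain ⟨hsem, hcan⟩ := hG
  -- triangle inequality for the canonical graph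
  have hTri : ∀ a b c, (G a b).le ((G a c).add (G c b)) := by
    intro a b c
    apply hcan
    intro w hw
    rw [← hsem] at hw
    obtain ⟨-, hsat⟩ := hw
    have h1 := Wsat_add (hsat a c) (hsat c b)
    have heq : (extV w c - extV w a) + (extV w b - extV w c) = extV w b - extV w a := by
      ring
    rwa [heq] at h1
  -- Z is nonempty
  have hne : Z.Nonempty := by
    by_contra hempty
    rw [Set.not_nonempty_iff_eq_empty] at hempty
    have hbnd : ∀ w : Weight, Bounds Z none none w := by
      intro w v hv
      rw [hempty] at hv
      exact absurd hv (Set.notMem_empty v)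
    cases hv : (G none none).val with
    | none => exact Wle_none2 hv rfl (hcan none none (wle 0) (hbnd _))
    | some c =>
      have := Wle_val2 hv rfl (hcan none none (wle (c - 1)) (hbnd _))
      omega
  obtain ⟨u, hu⟩ := hne
  have hu' : u ∈ sem G := by rw [hsem]; exact hu
  have hGaa : ∀ a, Weight.sat (G a a) 0 := by
    intro a
    have := hu'.2 a a
    rwa [sub_self] at this
  have hGx0 : ∀ x : X, (G (some x) none).le (wle 0) := by
    intro x
    apply hcan
    intro w hw
    rw [← hsem] at hw
    have h0 := hw.1 x
    show Weight.sat ⟨false, some 0⟩ (extV w none - extV w (some x))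
    have : extV w none - extV w (some x) ≤ ((0:ℤ):ℝ) := by
      simp only [extV]
      push_cast
      linarith
    simpa [Weight.sat] using this
  intro ν hν
  obtain ⟨hν1, hν2⟩ := hν
  obtain ⟨v, hv⟩ := solve (Finset.univ.toList) (Bg L U G ν)
    (fun a l => NoNegB hTri hGaa hν1 hν2 a l)
    (fun a b => Or.inl ⟨fun x _ => by simp, fun x _ => by simp⟩)
  have hvG : ∀ a b, (G a b).sat (extV v b - extV v a) := by
    intro a b
    cases a with
    | none =>
      cases b with
      | none => rw [sub_self]; exact hGaa none
      | some y => exact ofW_sat.mp ((Qg_le_G U G ν y) _ (hv none (some y)))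
    | some x =>
      cases b with
      | none => exact ofW_sat.mp ((Pg_le_G L G ν x) _ (hv (some x) none))
      | some y =>
        have h1 : RW.le (Bg L U G ν (some x) (some y)) (ofW (G (some x) (some y))) :=
          RW.min_le_left _ _
        exact ofW_sat.mp (h1 _ (hv (some x) (some y)))
  have hvpos : Nonneg v := by
    intro x
    have h1 := Wsat_elim_le (w := wle 0) rfl (Wsat_mono (hGx0 x) (hvG (some x) none))
    simp only [extV] at h1
    push_cast at h1
    linarith
  have hvZ : v ∈ Z := by rw [← hsem]; exact ⟨hvpos, hvG⟩
  have hup : ∀ x : X, (upE U ν x).sat (v x) := by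
    intro x
    have h2 := (Qg_le_upE U G ν x) _ (hv none (some x))
    simpa [extV] using h2
  have hlo : ∀ x : X, (loE L ν x).sat (-(v x)) := by
    intro x
    have h2 := (Pg_le_loE L G ν x) _ (hv (some x) none)
    simpa [extV] using h2
  refine ⟨hν1, v, hvZ, ?_⟩
  intro x
  by_cases hU : lbLtR (U x) (ν x)
  · rcases loE_cases L ν x with ⟨hl, n, hn, hnz⟩ | ⟨hl, hbot⟩ | ⟨n, hl, hn, hnz⟩
    · have hsat := hlo x
      rw [hl] at hsat
      have hge : ν x ≤ v x := by
        rcases RW.sat_some_elim rfl hsat with h | ⟨h, -⟩ <;> linarith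
      rcases eq_or_lt_of_le hge with he | hlt
      · exact Or.inl he.symm
      · exact Or.inr (Or.inr ⟨hU, hlt⟩)
    · rcases lt_trichotomy (v x) (ν x) with h | h | h
      · exact Or.inr (Or.inl ⟨by rw [hbot]; exact lbLtR_bot _, h⟩)
      · exact Or.inl h
      · exact Or.inr (Or.inr ⟨hU, h⟩)
    · have hsat := hlo x
      rw [hl] at hsat
      have hgt : (n:ℝ) < v x := by
        rcases RW.sat_some_elim rfl hsat with h | ⟨-, habs⟩
        · linarith
        · simp at habs
      rcases lt_trichotomy (v x) (ν x) with h | h | h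
      · refine Or.inr (Or.inl ⟨?_, h⟩)
        intro n' hn'
        rw [hn] at hn'
        have hnn : n = n' := by exact_mod_cast hn'
        rw [← hnn]; exact hgt
      · exact Or.inl h
      · exact Or.inr (Or.inr ⟨hU, h⟩)
  · have hsatu := hup x
    rw [show upE U ν x = ⟨false, some (ν x)⟩ from by simp [upE, hU]] at hsatu
    have hle : v x ≤ ν x := by
      rcases RW.sat_some_elim rfl hsatu with h | ⟨h, -⟩ <;> linarith
    rcases loE_cases L ν x with ⟨hl, n, hn, hnz⟩ | ⟨hl, hbot⟩ | ⟨n, hl, hn, hnz⟩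
    · have hsat := hlo x
      rw [hl] at hsat
      have hge : ν x ≤ v x := by
        rcases RW.sat_some_elim rfl hsat with h | ⟨h, -⟩ <;> linarith
      exact Or.inl (le_antisymm hle hge)
    · rcases eq_or_lt_of_le hle with he | hlt
      · exact Or.inl he
      · exact Or.inr (Or.inl ⟨by rw [hbot]; exact lbLtR_bot _, hlt⟩)
    · have hsat := hlo x
      rw [hl] at hsat
      have hgt : (n:ℝ) < v x := by
        rcases RW.sat_some_elim rfl hsat with h | ⟨-, habs⟩
        · linarith
        · simp at habs
      rcases eq_or_lt_of_le hle with he | hlt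
      · exact Or.inl he
      · refine Or.inr (Or.inl ⟨?_, hlt⟩)
        intro n' hn'
        rw [hn] at hn'
        have hnn : n = n' := by exact_mod_cast hn'
        rw [← hnn]; exact hgt

end TAform

end
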